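/- Let g(y₂) = Σ_{k≥1} c_k e^{-k y₂} on (0,∞) with Σ_{k≥1} |c_k|² k < ∞. Then for every α ∈ ℝ with α > -1, ∫₀^∞ |g(y₂)|² y₂^α dy₂ ≤ K(α) Σ_{k≥1} k |c_k|², where K(α) depends only on α. In particular g belongs to every weighted L² space with polynomial weight y₂^α, α > -1. -/

import Mathlib

open MeasureTheory Real Set

/-- Cauchy–Schwarz for infinite series of nonnegative reals. -/
lemma cs_tsum_aux {f g : ℕ → ℝ} (hf : ∀ n, 0 ≤ f n) (hg : ∀ n, 0 ≤ g n)
    (hf2 : Summable fun n => f n ^ 2) (hg2 : Summable fun n => g n ^ 2) :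
    Summable (fun n => f n * g n) ∧
      (∑' n, f n * g n) ^ 2 ≤ (∑' n, f n ^ 2) * (∑' n, g n ^ 2) := by
  have hsum : Summable (fun n => f n * g n) := by
    refine Summable.of_nonneg_of_le (fun n => mul_nonneg (hf n) (hg n))
      (fun n => ?_) (hf2.add hg2)
    nlinarith [sq_nonneg (f n - g n)]
  refine ⟨hsum, ?_⟩
  have hA : 0 ≤ ∑' n, f n ^ 2 := tsum_nonneg fun n => sq_nonneg _
  have hB : 0 ≤ ∑' n, g n ^ 2 := tsum_nonneg fun n => sq_nonneg _
  have key : (∑' n, f n * g n) ≤ Real.sqrt (∑' n, f n ^ 2) * Real.sqrt (∑' n, g n ^ 2) := by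
    refine Summable.tsum_le_of_sum_le hsum fun s => ?_
    calc ∑ n ∈ s, f n * g n
        ≤ Real.sqrt (∑ n ∈ s, f n ^ 2) * Real.sqrt (∑ n ∈ s, g n ^ 2) :=
          Real.sum_mul_le_sqrt_mul_sqrt s f g
      _ ≤ Real.sqrt (∑' n, f n ^ 2) * Real.sqrt (∑' n, g n ^ 2) := by
          refine mul_le_mul (Real.sqrt_le_sqrt ?_) (Real.sqrt_le_sqrt ?_)
            (Real.sqrt_nonneg _) (Real.sqrt_nonneg _)
          · exact Summable.sum_le_tsum s (fun n _ => sq_nonneg _) hf2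
          · exact Summable.sum_le_tsum s (fun n _ => sq_nonneg _) hg2
  calc (∑' n, f n * g n) ^ 2
      ≤ (Real.sqrt (∑' n, f n ^ 2) * Real.sqrt (∑' n, g n ^ 2)) ^ 2 :=
        pow_le_pow_left₀ (tsum_nonneg fun n => mul_nonneg (hf n) (hg n)) key 2
    _ = (∑' n, f n ^ 2) * (∑' n, g n ^ 2) := by
        rw [mul_pow, Real.sq_sqrt hA, Real.sq_sqrt hB]

/-- If `g(y₂) = Σ_{k≥1} c_k e^{-k y₂}` with `Σ k |c_k|² < ∞`, then for every `α > -1`,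
`∫₀^∞ |g(y₂)|² y₂^α dy₂ ≤ K(α) Σ k |c_k|²` with `K(α)` depending only on `α`. -/
theorem stmt12 (α : ℝ) (hα : -1 < α) :
    ∃ K : ℝ, 0 < K ∧ ∀ c : ℕ → ℂ,
      Summable (fun k : ℕ => ((k : ℝ) + 1) * ‖c k‖ ^ 2) →
      (∫ y in Ioi (0 : ℝ),
          ‖∑' k : ℕ, c k * (Real.exp (-((k : ℝ) + 1) * y) : ℂ)‖ ^ 2 * y ^ α)
        ≤ K * ∑' k : ℕ, ((k : ℝ) + 1) * ‖c k‖ ^ 2 := by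
  have hα1 : 0 < α + 1 := by linarith
  have hΓ : 0 < Real.Gamma (α + 1) := Real.Gamma_pos_of_pos hα1
  set u : ℕ → ℝ :=
    fun k => Real.Gamma (α + 1) * (1 / (2 * ((k : ℝ) + 1))) ^ (α + 1) / ((k : ℝ) + 1) with hu_def
  have hu_nonneg : ∀ k, 0 ≤ u k := by
    intro k
    have h1 : (0:ℝ) ≤ (1 / (2 * ((k : ℝ) + 1))) ^ (α + 1) :=
      Real.rpow_nonneg (by positivity) _
    positivity
  have hu_sum : Summable u := by
    have hbase : Summable (fun k : ℕ => 1 / ((k : ℝ) + 1) ^ (α + 2)) := by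
      have h := (Real.summable_one_div_nat_rpow (p := α + 2)).2 (by linarith)
      have h2 := h.comp_injective Nat.succ_injective
      refine h2.congr fun k => ?_
      have : ((Nat.succ k : ℕ) : ℝ) = (k : ℝ) + 1 := by push_cast; ring
      simp only [Function.comp, this]
    refine Summable.of_nonneg_of_le hu_nonneg (fun k => ?_)
      (hbase.mul_left (Real.Gamma (α + 1)))
    have hk1 : (0:ℝ) < (k : ℝ) + 1 := by positivity
    have hle : (1 / (2 * ((k : ℝ) + 1))) ^ (α + 1) ≤ (1 / ((k : ℝ) + 1)) ^ (α + 1) := by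
      refine Real.rpow_le_rpow (by positivity) ?_ hα1.le
      rw [div_le_div_iff₀ (by positivity) hk1]
      nlinarith
    calc u k ≤ Real.Gamma (α + 1) * (1 / ((k : ℝ) + 1)) ^ (α + 1) / ((k : ℝ) + 1) := by
          rw [hu_def]
          exact (div_le_div_iff_of_pos_right hk1).2 (mul_le_mul_of_nonneg_left hle hΓ.le)
      _ = Real.Gamma (α + 1) * (1 / (((k : ℝ) + 1) ^ (α + 2))) := by
          have e1 : (1 / ((k:ℝ)+1)) ^ (α+1) = (((k:ℝ)+1) ^ (α+1))⁻¹ := by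
            rw [one_div, Real.inv_rpow hk1.le]
          have e2 : ((k:ℝ)+1) ^ (α+2) = ((k:ℝ)+1) ^ (α+1) * ((k:ℝ)+1) := by
            rw [show α + 2 = (α+1)+1 by ring, Real.rpow_add_one hk1.ne']
          rw [e1, e2, one_div, mul_inv, div_eq_mul_inv]
          ring
  set C : ℝ := ∑' k, u k with hCdef
  have hC0 : 0 ≤ C := tsum_nonneg hu_nonneg
  refine ⟨C + 1, by linarith, ?_⟩
  intro c hS
  set S : ℝ := ∑' k : ℕ, ((k : ℝ) + 1) * ‖c k‖ ^ 2 with hSdef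
  have hS0 : 0 ≤ S := tsum_nonneg fun k => by positivity
  -- the majorant terms
  set F : ℕ → ℝ → ℝ :=
    fun k y => S / ((k : ℝ) + 1) * (y ^ α * Real.exp (-(2 * ((k : ℝ) + 1)) * y)) with hF_def
  -- Key pointwise facts on `Ioi 0`
  have key : ∀ y : ℝ, 0 < y →
      (Summable fun k : ℕ => ‖c k * (Real.exp (-((k : ℝ) + 1) * y) : ℂ)‖) ∧
      Summable (fun k => F k y) ∧
      ‖∑' k : ℕ, c k * (Real.exp (-((k : ℝ) + 1) * y) : ℂ)‖ ^ 2 * y ^ α ≤ ∑' k, F k y := by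
    intro y hy
    set r : ℝ := Real.exp (-(2 * y)) with hr_def
    have hr0 : 0 < r := Real.exp_pos _
    have hr1 : r < 1 := Real.exp_lt_one_iff.2 (by linarith)
    set fk : ℕ → ℝ := fun k => Real.sqrt ((k : ℝ) + 1) * ‖c k‖ with hfk_def
    set gk : ℕ → ℝ := fun k => Real.exp (-((k : ℝ) + 1) * y) / Real.sqrt ((k : ℝ) + 1)
      with hgk_def
    have hfk2 : ∀ k, fk k ^ 2 = ((k : ℝ) + 1) * ‖c k‖ ^ 2 := by
      intro k
      rw [hfk_def, mul_pow, Real.sq_sqrt (by positivity)]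
    have hexp2 : ∀ k : ℕ, Real.exp (-((k : ℝ) + 1) * y) ^ 2
        = Real.exp (-(2 * ((k : ℝ) + 1)) * y) := by
      intro k
      rw [sq, ← Real.exp_add]
      congr 1
      ring
    have hgk2 : ∀ k, gk k ^ 2 = Real.exp (-(2 * ((k : ℝ) + 1)) * y) / ((k : ℝ) + 1) := by
      intro k
      rw [hgk_def, div_pow, Real.sq_sqrt (by positivity), hexp2]
    have hgk2sum : Summable fun k => gk k ^ 2 := by
      refine Summable.of_nonneg_of_le (fun k => sq_nonneg _) (fun k => ?_)
        (summable_geometric_of_lt_one hr0.le hr1)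
      rw [hgk2 k]
      have h1 : Real.exp (-(2 * ((k : ℝ) + 1)) * y) / ((k : ℝ) + 1)
          ≤ Real.exp (-(2 * ((k : ℝ) + 1)) * y) :=
        div_le_self (Real.exp_pos _).le (by push_cast; linarith [Nat.cast_nonneg (α := ℝ) k])
      have h2 : Real.exp (-(2 * ((k : ℝ) + 1)) * y) = r ^ (k + 1) := by
        rw [hr_def, ← Real.exp_nat_mul]
        congr 1
        push_cast
        ring
      have h3 : r ^ (k + 1) ≤ r ^ k := pow_le_pow_of_le_one hr0.le hr1.le (Nat.le_succ k)
      calc Real.exp (-(2 * ((k : ℝ) + 1)) * y) / ((k : ℝ) + 1)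
          ≤ Real.exp (-(2 * ((k : ℝ) + 1)) * y) := h1
        _ = r ^ (k + 1) := h2
        _ ≤ r ^ k := h3
    have hfk2sum : Summable fun k => fk k ^ 2 := hS.congr fun k => (hfk2 k).symm
    have CS := cs_tsum_aux (f := fk) (g := gk)
      (fun k => mul_nonneg (Real.sqrt_nonneg _) (norm_nonneg _))
      (fun k => div_nonneg (Real.exp_pos _).le (Real.sqrt_nonneg _)) hfk2sum hgk2sum
    have hprod : ∀ k, fk k * gk k = ‖c k * (Real.exp (-((k : ℝ) + 1) * y) : ℂ)‖ := by
      intro k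
      rw [norm_mul, Complex.norm_real, Real.norm_eq_abs, Real.abs_exp, hfk_def, hgk_def]
      have hs : Real.sqrt ((k : ℝ) + 1) ≠ 0 := by positivity
      field_simp
    have hsum1 : Summable fun k => ‖c k * (Real.exp (-((k : ℝ) + 1) * y) : ℂ)‖ :=
      CS.1.congr hprod
    have hFsummable : Summable (fun k => F k y) := by
      refine (hgk2sum.mul_left (S * y ^ α)).congr fun k => ?_
      rw [hgk2 k, hF_def]
      ring
    refine ⟨hsum1, hFsummable, ?_⟩
    have hnorm : ‖∑' k : ℕ, c k * (Real.exp (-((k : ℝ) + 1) * y) : ℂ)‖ ≤ ∑' k, fk k * gk k := by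
      calc ‖∑' k : ℕ, c k * (Real.exp (-((k : ℝ) + 1) * y) : ℂ)‖
          ≤ ∑' k, ‖c k * (Real.exp (-((k : ℝ) + 1) * y) : ℂ)‖ := norm_tsum_le_tsum_norm hsum1
        _ = ∑' k, fk k * gk k := (tsum_congr hprod).symm
    have hsq : ‖∑' k : ℕ, c k * (Real.exp (-((k : ℝ) + 1) * y) : ℂ)‖ ^ 2
        ≤ S * ∑' k, gk k ^ 2 := by
      calc ‖∑' k : ℕ, c k * (Real.exp (-((k : ℝ) + 1) * y) : ℂ)‖ ^ 2
          ≤ (∑' k, fk k * gk k) ^ 2 := pow_le_pow_left₀ (norm_nonneg _) hnorm 2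
        _ ≤ (∑' k, fk k ^ 2) * (∑' k, gk k ^ 2) := CS.2
        _ = S * ∑' k, gk k ^ 2 := by rw [hSdef]; congr 1; exact tsum_congr hfk2
    have hFtsum : ∑' k, F k y = S * (∑' k, gk k ^ 2) * y ^ α := by
      rw [show S * (∑' k, gk k ^ 2) * y ^ α = (S * y ^ α) * (∑' k, gk k ^ 2) by ring,
        ← tsum_mul_left]
      refine tsum_congr fun k => ?_
      rw [hgk2 k, hF_def]
      ring
    rw [hFtsum]
    have hyα : 0 ≤ y ^ α := Real.rpow_nonneg hy.le α
    exact mul_le_mul_of_nonneg_right hsq hyα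
  -- measurability of F k
  have hrpow : Measurable fun y : ℝ => y ^ α := by measurability
  have hFmeas : ∀ k, Measurable (F k) := by
    intro k
    rw [hF_def]
    exact (hrpow.mul
      ((Real.continuous_exp.comp (continuous_const.mul continuous_id)).measurable)).const_mul _
  -- integrability of F k on Ioi 0
  have hint : ∀ k : ℕ, IntegrableOn (F k) (Ioi 0) := by
    intro k
    have h0 : (0:ℝ) < 2 * ((k : ℝ) + 1) := by positivity
    have h1 := integrableOn_rpow_mul_exp_neg_mul_rpow (s := α) (p := 1)
      (b := 2 * ((k : ℝ) + 1)) hα zero_lt_one h0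
    have h2 : IntegrableOn (fun x : ℝ => x ^ α * Real.exp (-(2 * ((k : ℝ) + 1)) * x)) (Ioi 0) :=
      h1.congr_fun (fun x _ => by beta_reduce; rw [Real.rpow_one]) measurableSet_Ioi
    exact h2.const_mul _
  -- value of the integrals
  have hval : ∀ k : ℕ, ∫ y in Ioi 0, F k y = S * u k := by
    intro k
    simp only [hF_def]
    rw [MeasureTheory.integral_const_mul]
    have h0 : (0:ℝ) < 2 * ((k : ℝ) + 1) := by positivity
    have h := integral_rpow_mul_exp_neg_mul_Ioi (a := α + 1) (r := 2 * ((k : ℝ) + 1)) hα1 h0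
    have heq : (∫ y in Ioi (0:ℝ), y ^ α * Real.exp (-(2 * ((k : ℝ) + 1)) * y))
        = (1 / (2 * ((k : ℝ) + 1))) ^ (α + 1) * Real.Gamma (α + 1) := by
      rw [← h]
      refine setIntegral_congr_fun measurableSet_Ioi fun t _ => ?_
      rw [neg_mul]
      norm_num
    rw [heq, hu_def]
    ring
  -- nonnegativity of each F k on Ioi 0
  have hFnn : ∀ k : ℕ, ∀ y : ℝ, 0 < y → 0 ≤ F k y := by
    intro k y hy
    rw [hF_def]
    exact mul_nonneg (div_nonneg hS0 (by positivity))
      (mul_nonneg (Real.rpow_nonneg hy.le _) (Real.exp_pos _).le)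
  -- measurability of the integrand
  have hGmeas : AEStronglyMeasurable
      (fun y => ∑' k : ℕ, c k * (Real.exp (-((k : ℝ) + 1) * y) : ℂ))
      ((volume : Measure ℝ).restrict (Ioi 0)) := by
    refine aestronglyMeasurable_of_tendsto_ae (u := Filter.atTop)
      (f := fun n y => ∑ k ∈ Finset.range n, c k * (Real.exp (-((k : ℝ) + 1) * y) : ℂ)) ?_ ?_
    · intro n
      refine Continuous.aestronglyMeasurable ?_
      refine continuous_finset_sum _ fun k _ => ?_
      exact continuous_const.mul (Complex.continuous_ofReal.comp
        (Real.continuous_exp.comp (continuous_const.mul continuous_id)))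
    · filter_upwards [ae_restrict_mem measurableSet_Ioi] with y hy
      exact ((key y hy).1.of_norm).hasSum.tendsto_sum_nat
  have hImeas : AEStronglyMeasurable
      (fun y => ‖∑' k : ℕ, c k * (Real.exp (-((k : ℝ) + 1) * y) : ℂ)‖ ^ 2 * y ^ α)
      ((volume : Measure ℝ).restrict (Ioi 0)) := by
    refine AEStronglyMeasurable.mul ?_ ?_
    · exact (hGmeas.norm.aemeasurable.pow_const 2).aestronglyMeasurable
    · exact hrpow.aestronglyMeasurable
  -- nonnegativity a.e. of the integrand
  have hInn : 0 ≤ᵐ[(volume : Measure ℝ).restrict (Ioi 0)]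
      fun y => ‖∑' k : ℕ, c k * (Real.exp (-((k : ℝ) + 1) * y) : ℂ)‖ ^ 2 * y ^ α := by
    filter_upwards [ae_restrict_mem measurableSet_Ioi] with y hy
    exact mul_nonneg (by positivity) (Real.rpow_nonneg (le_of_lt hy) α)
  rw [integral_eq_lintegral_of_nonneg_ae hInn hImeas]
  refine ENNReal.toReal_le_of_le_ofReal (by nlinarith) ?_
  calc ∫⁻ y in Ioi (0:ℝ), ENNReal.ofReal
        (‖∑' k : ℕ, c k * (Real.exp (-((k : ℝ) + 1) * y) : ℂ)‖ ^ 2 * y ^ α)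
      ≤ ∫⁻ y in Ioi (0:ℝ), ∑' k, ENNReal.ofReal (F k y) := by
        refine lintegral_mono_ae ?_
        filter_upwards [ae_restrict_mem measurableSet_Ioi] with y hy
        obtain ⟨h1, h2, h3⟩ := key y hy
        exact le_trans (ENNReal.ofReal_le_ofReal h3)
          (le_of_eq (ENNReal.ofReal_tsum_of_nonneg (fun k => hFnn k y hy) h2))
    _ = ∑' k, ∫⁻ y in Ioi (0:ℝ), ENNReal.ofReal (F k y) :=
        lintegral_tsum fun k => (ENNReal.measurable_ofReal.comp (hFmeas k)).aemeasurable
    _ = ∑' k, ENNReal.ofReal (∫ y in Ioi (0:ℝ), F k y) := by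
        refine tsum_congr fun k => ?_
        refine (ofReal_integral_eq_lintegral_ofReal (hint k) ?_).symm
        filter_upwards [ae_restrict_mem measurableSet_Ioi] with y hy
        exact hFnn k y hy
    _ = ENNReal.ofReal (∑' k, ∫ y in Ioi (0:ℝ), F k y) := by
        refine (ENNReal.ofReal_tsum_of_nonneg (fun k => ?_) ?_).symm
        · rw [hval k]; exact mul_nonneg hS0 (hu_nonneg k)
        · exact (hu_sum.mul_left S).congr fun k => (hval k).symm
    _ ≤ ENNReal.ofReal ((C + 1) * S) := by
        refine ENNReal.ofReal_le_ofReal ?_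
        have : ∑' k, ∫ y in Ioi (0:ℝ), F k y = S * C := by
          rw [hCdef, ← tsum_mul_left]
          exact tsum_congr hval
        rw [this]
        nlinarith
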